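/- Let Δ be a two-dimensional lattice polygon and let P, Q be distinct lattice points of Δ. If there exists an integer q > 1 such that (qΔ − P) ∩ (qΔ − Q) ⊆ (q−1)Δ, then (qΔ − P) ∩ (qΔ − Q) ⊆ (q−1)Δ holds for every integer q ≥ 1. -/

import Mathlib

open scoped Pointwise

noncomputable section

/-- The embedding of the lattice `ℤ²` into `ℝ²`. -/
def ι2 (p : ℤ × ℤ) : ℝ × ℝ := ((p.1 : ℝ), (p.2 : ℝ))

/-- A lattice polygon: the convex hull of a finite set of lattice points. -/
def IsLatticePolygon (Δ : Set (ℝ × ℝ)) : Prop :=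
  ∃ S : Finset (ℤ × ℤ), Δ = convexHull ℝ (ι2 '' ↑S)

/-- The translate `A − P` of a set. -/
def transl (A : Set (ℝ × ℝ)) (P : ℝ × ℝ) : Set (ℝ × ℝ) := (fun x => x - P) '' A

lemma mem_transl {A : Set (ℝ × ℝ)} {p x : ℝ × ℝ} : x ∈ transl A p ↔ x + p ∈ A := by
  constructor
  · rintro ⟨y, hy, rfl⟩
    simpa using hy
  · intro h
    exact ⟨x + p, h, add_sub_cancel_right x p⟩

/-- Auxiliary: a member of `a • Δ` plus a member of `b • Δ` lies in `(a+b) • Δ`. -/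
lemma mem_add_smul {Δ : Set (ℝ × ℝ)} (hconv : Convex ℝ Δ) {a b : ℝ} (ha : 0 ≤ a) (hb : 0 ≤ b)
    {u w : ℝ × ℝ} (hu : u ∈ a • Δ) (hw : w ∈ b • Δ) : u + w ∈ (a + b) • Δ := by
  rw [hconv.add_smul ha hb]
  exact Set.add_mem_add hu hw

/-- The key lemma, for real dilation factors. -/
lemma key (Δ : Set (ℝ × ℝ)) (hconv : Convex ℝ Δ) (hcomp : IsCompact Δ)
    (p r : ℝ × ℝ) (hp : p ∈ Δ) (hr : r ∈ Δ)
    (q₀ : ℝ) (hq₀ : 1 < q₀)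
    (hC : ∀ x : ℝ × ℝ, x + p ∈ q₀ • Δ → x + r ∈ q₀ • Δ → x ∈ (q₀ - 1) • Δ)
    (q : ℝ) (hq : 1 ≤ q) (x : ℝ × ℝ) (hxp : x + p ∈ q • Δ) (hxr : x + r ∈ q • Δ) :
    x ∈ (q - 1) • Δ := by
  rcases le_or_gt q₀ q with hle | hlt
  · -- easy case : q ≥ q₀
    have hq1 : (0:ℝ) < q - 1 := by linarith
    set α : ℝ := (q₀ - 1) / (q - 1) with hα
    have hα0 : 0 < α := div_pos (by linarith) hq1
    have hα1 : α ≤ 1 := by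
      rw [hα, div_le_one hq1]; linarith
    have hαq : α * (q - 1) = q₀ - 1 := div_mul_cancel₀ _ (ne_of_gt hq1)
    have key1 : ∀ w ∈ Δ, α • x + w ∈ q₀ • Δ → True := fun _ _ _ => trivial
    have hmem : ∀ w : ℝ × ℝ, w ∈ Δ → x + w ∈ q • Δ → α • x + w ∈ q₀ • Δ := by
      intro w hw hxw
      have h1 : α • (x + w) ∈ (α * q) • Δ := by
        rw [mul_smul]; exact Set.smul_mem_smul_set hxw
      have h2 : (1 - α) • w ∈ (1 - α) • Δ := Set.smul_mem_smul_set hw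
      have h3 : α • (x + w) + (1 - α) • w ∈ (α * q + (1 - α)) • Δ :=
        mem_add_smul hconv (by positivity) (by linarith) h1 h2
      have he : α • (x + w) + (1 - α) • w = α • x + w := by
        rw [smul_add]; module
      have hc : α * q + (1 - α) = q₀ := by
        have : α * q - α = q₀ - 1 := by
          calc α * q - α = α * (q - 1) := by ring
          _ = q₀ - 1 := hαq
        linarith
      rw [he, hc] at h3
      exact h3
    have h1 := hmem p hp hxp
    have h2 := hmem r hr hxr
    have h3 : α • x ∈ (q₀ - 1) • Δ := hC (α • x) h1 h2
    rw [← hαq, mul_smul] at h3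
    exact (Set.smul_mem_smul_set_iff₀ (ne_of_gt hα0) _ _).mp h3
  · -- hard case : q < q₀, via separation
    set c : ℝ := q₀ - q with hc
    have hc0 : 0 < c := by linarith
    have hclaim : ∀ z ∈ Δ, x + c • z ∈ (q - 1) • Δ + c • Δ := by
      intro z hz
      have hz' : c • z ∈ c • Δ := Set.smul_mem_smul_set hz
      have h1 : (x + c • z) + p ∈ q₀ • Δ := by
        have := mem_add_smul hconv (by linarith : (0:ℝ) ≤ q) (le_of_lt hc0) hxp hz'
        have he : x + p + c • z = x + c • z + p := by abel
        rw [he] at this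
        have : x + c • z + p ∈ (q + c) • Δ := this
        simpa [hc] using this
      have h2 : (x + c • z) + r ∈ q₀ • Δ := by
        have := mem_add_smul hconv (by linarith : (0:ℝ) ≤ q) (le_of_lt hc0) hxr hz'
        have he : x + r + c • z = x + c • z + r := by abel
        rw [he] at this
        have : x + c • z + r ∈ (q + c) • Δ := this
        simpa [hc] using this
      have h3 := hC _ h1 h2
      have he : q₀ - 1 = (q - 1) + c := by ring
      rw [he, hconv.add_smul (by linarith) (le_of_lt hc0)] at h3
      exact h3
    -- show x ∈ (q-1) • Δ by contradiction using Hahn-Banach separation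
    by_contra hx
    have hBconv : Convex ℝ ((q - 1) • Δ) := hconv.smul _
    have hBclosed : IsClosed ((q - 1) • Δ) := (hcomp.smul (q - 1)).isClosed
    obtain ⟨f, u, hfu, hux⟩ := geometric_hahn_banach_closed_point hBconv hBclosed hx
    obtain ⟨z, hz, hzmax⟩ := hcomp.exists_isMaxOn ⟨p, hp⟩ f.continuous.continuousOn
    obtain ⟨b, hb, w', hw', he⟩ := hclaim z hz
    obtain ⟨w, hw, rfl⟩ := hw'
    have hfb : f b < u := hfu b hb
    have hfw : f w ≤ f z := hzmax hw
    have hfe : f x + c * f z = f b + c * f w := by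
      have := congrArg f he
      simpa [map_add, map_smul, smul_eq_mul] using this.symm
    have : f x ≤ f b := by nlinarith
    linarith

/-- if `(qΔ − P) ∩ (qΔ − Q) ⊆ (q−1)Δ` holds for some integer `q > 1`,
then it holds for every integer `q ≥ 1`. -/
theorem stmt0 (Δ : Set (ℝ × ℝ)) (hΔ : IsLatticePolygon Δ) (h2 : (interior Δ).Nonempty)
    (P Q : ℤ × ℤ) (hP : ι2 P ∈ Δ) (hQ : ι2 Q ∈ Δ) (hPQ : P ≠ Q)
    (hex : ∃ q : ℕ, 1 < q ∧
      transl ((q : ℝ) • Δ) (ι2 P) ∩ transl ((q : ℝ) • Δ) (ι2 Q) ⊆ ((q : ℝ) - 1) • Δ) :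
    ∀ q : ℕ, 1 ≤ q →
      transl ((q : ℝ) • Δ) (ι2 P) ∩ transl ((q : ℝ) • Δ) (ι2 Q) ⊆ ((q : ℝ) - 1) • Δ := by
  obtain ⟨S, hS⟩ := hΔ
  have hconv : Convex ℝ Δ := hS ▸ convex_convexHull ℝ _
  have hcomp : IsCompact Δ := hS ▸ (S.finite_toSet.image ι2).isCompact_convexHull ℝ
  obtain ⟨q₀, hq₀, hsub⟩ := hex
  have hq₀R : (1:ℝ) < (q₀ : ℝ) := by exact_mod_cast hq₀
  have hC : ∀ x : ℝ × ℝ, x + ι2 P ∈ (q₀ : ℝ) • Δ → x + ι2 Q ∈ (q₀ : ℝ) • Δ →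
      x ∈ ((q₀ : ℝ) - 1) • Δ := by
    intro x h1 h2
    exact hsub ⟨mem_transl.mpr h1, mem_transl.mpr h2⟩
  intro q hq x hx
  obtain ⟨hx1, hx2⟩ := hx
  have hqR : (1:ℝ) ≤ (q : ℝ) := by exact_mod_cast hq
  exact key Δ hconv hcomp (ι2 P) (ι2 Q) hP hQ (q₀ : ℝ) hq₀R hC (q : ℝ) hqR x
    (mem_transl.mp hx1) (mem_transl.mp hx2)
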